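/- Let G be a finite simple graph, x ∈ V(G), and p = χ(G[N(x)]) ≥ 2. Let V_1, …, V_p be the color classes of a proper p-coloring of G[N(x)] with |V_1| ≥ ⋯ ≥ |V_p| ≥ 1. If for some r with 2 ≤ r ≤ p we have |V_r ∪ ⋯ ∪ V_p| ≤ χ(G) − r − 1, then p ≤ χ(G) − 2 and V(G) can be partitioned into two sets S and T with χ(G[S]) ≥ r and χ(G[T]) ≥ χ(G) + 1 − r. -/

import Mathlib

open SimpleGraph Set

attribute [local instance] Classical.propDecidable

/-- The chromatic number of a graph as a natural number. -/
noncomputable def chromNum {V : Type*} (G : SimpleGraph V) : ℕ := sInf {n | G.Colorable n}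

/-- A set of vertices is independent if its elements are pairwise non-adjacent. -/
def IsIndepSet {V : Type*} (G : SimpleGraph V) (A : Set V) : Prop := Gᶜ.IsClique A

/-- The independence number of a graph: the clique number of the complement. -/
noncomputable def indepNum {V : Type*} (G : SimpleGraph V) [Fintype V] : ℕ := Gᶜ.cliqueNum

/-- A vertex is bisimplicial if its neighborhood is the union of two cliques. -/
def Bisimplicial {V : Type*} (G : SimpleGraph V) (x : V) : Prop :=
  ∃ A B : Set V, G.IsClique A ∧ G.IsClique B ∧ G.neighborSet x = A ∪ B

/-- `G` has a `K_k` minor: there are `k` pairwise disjoint connected branch sets,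
pairwise joined by an edge. -/
def HasKMinor {V : Type*} (G : SimpleGraph V) (k : ℕ) : Prop :=
  ∃ f : Fin k → Set V,
    (Pairwise fun i j => Disjoint (f i) (f j)) ∧
    (∀ i, (G.induce (f i)).Connected) ∧
    (∀ i j, i ≠ j → ∃ u ∈ f i, ∃ v ∈ f j, G.Adj u v)

/-- A graph has an even hole if some even cycle of length at least 4 embeds in it
as an induced subgraph. -/
def HasEvenHole {V : Type*} (G : SimpleGraph V) : Prop :=
  ∃ n : ℕ, 4 ≤ n ∧ Even n ∧ Nonempty (cycleGraph n ↪g G)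

/-- A graph is even-hole-free if it has no even hole. -/
def EvenHoleFree {V : Type*} (G : SimpleGraph V) : Prop := ¬ HasEvenHole G

lemma chromNum_colorable {V : Type*} [Fintype V] (G : SimpleGraph V) :
    G.Colorable (chromNum G) := by
  have : {n | G.Colorable n}.Nonempty := ⟨Fintype.card V, G.colorable_of_fintype⟩
  exact Nat.sInf_mem this

lemma chromNum_le {V : Type*} (G : SimpleGraph V) {m : ℕ} (h : G.Colorable m) :
    chromNum G ≤ m := Nat.sInf_le h

lemma lt_chromNum {V : Type*} [Fintype V] (G : SimpleGraph V) {m : ℕ}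
    (h : ¬ G.Colorable m) : m < chromNum G := by
  by_contra h'
  push_neg at h'
  exact h ((chromNum_colorable G).mono h')

lemma colorable_of_fun {V : Type*} (G : SimpleGraph V) {m : ℕ} (C : V → ℕ)
    (h1 : ∀ v, C v < m) (h2 : ∀ u v, G.Adj u v → C u ≠ C v) : G.Colorable m :=
  ⟨SimpleGraph.Coloring.mk (fun v => ⟨C v, h1 v⟩)
    (fun {u v} hadj h => h2 u v hadj (congrArg Fin.val h))⟩

lemma colorable_induce_iff {V : Type*} (G : SimpleGraph V) (A : Set V) (m : ℕ) :
    (G.induce A).Colorable m ↔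
      ∃ C : V → ℕ, (∀ a ∈ A, C a < m) ∧
        ∀ u v, u ∈ A → v ∈ A → G.Adj u v → C u ≠ C v := by
  constructor
  · rintro ⟨c⟩
    refine ⟨fun v => if h : v ∈ A then (c ⟨v, h⟩ : ℕ) else 0, ?_, ?_⟩
    · intro a ha
      simp only [dif_pos ha]
      exact (c ⟨a, ha⟩).isLt
    · intro u v hu hv hadj
      simp only [dif_pos hu, dif_pos hv]
      have hval := c.valid (show (G.induce A).Adj ⟨u, hu⟩ ⟨v, hv⟩ from hadj)
      exact fun h => hval (Fin.ext h)
  · rintro ⟨C, h1, h2⟩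
    exact ⟨SimpleGraph.Coloring.mk (fun a => ⟨C a, h1 a a.2⟩)
      (fun {a b} hab h => h2 a b a.2 b.2 hab (congrArg Fin.val h))⟩

theorem stmt_3 {V : Type*} [Fintype V] (G : SimpleGraph V) (x : V)
    (p : ℕ) (hp : p = chromNum (G.induce (G.neighborSet x))) (hp2 : 2 ≤ p)
    (Vc : Fin p → Set V)
    (hsub : ∀ i, Vc i ⊆ G.neighborSet x)
    (hcover : (⋃ i, Vc i) = G.neighborSet x)
    (hdisj : Pairwise fun i j => Disjoint (Vc i) (Vc j))
    (hindep : ∀ i, _root_.IsIndepSet G (Vc i))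
    (hne : ∀ i, (Vc i).Nonempty)
    (hmono : ∀ i j : Fin p, i ≤ j → (Vc j).ncard ≤ (Vc i).ncard)
    (r : ℕ) (hr2 : 2 ≤ r) (hrp : r ≤ p)
    (hcard : (⋃ i ∈ {i : Fin p | r ≤ (i : ℕ) + 1}, Vc i).ncard ≤ chromNum G - r - 1) :
    p ≤ chromNum G - 2 ∧
    ∃ S T : Set V, S ∪ T = Set.univ ∧ Disjoint S T ∧
      r ≤ chromNum (G.induce S) ∧ chromNum G + 1 - r ≤ chromNum (G.induce T) := by
  classical
  set n := chromNum G with hn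
  set W : Set V := ⋃ i ∈ {i : Fin p | r ≤ (i : ℕ) + 1}, Vc i with hWdef
  clear_value n
  have hpne : 0 < p := by omega
  -- the index function
  set f : V → Fin p := fun v => if h : ∃ i, v ∈ Vc i then h.choose else ⟨0, hpne⟩ with hf
  have hfmem : ∀ v, (∃ i, v ∈ Vc i) → v ∈ Vc (f v) := by
    intro v h
    simp only [hf, dif_pos h]
    exact h.choose_spec
  have hfeq : ∀ i, ∀ v ∈ Vc i, f v = i := by
    intro i v hv
    by_contra hne'
    exact Set.disjoint_left.mp (hdisj hne') (hfmem v ⟨i, hv⟩) hv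
  have hnbr : ∀ v ∈ G.neighborSet x, v ∈ Vc (f v) := by
    intro v hv
    rw [← hcover] at hv
    exact hfmem v (Set.mem_iUnion.mp hv)
  have hnadj : ∀ i, ∀ u ∈ Vc i, ∀ v ∈ Vc i, ¬ G.Adj u v := by
    intro i u hu v hv hadj
    have h := hindep i hu hv hadj.ne
    rw [SimpleGraph.compl_adj] at h
    exact h.2 hadj
  -- the sets S and T
  set U : Set V := ⋃ i ∈ {i : Fin p | (i : ℕ) + 1 < r}, Vc i with hUdef
  set S : Set V := insert x U with hSdef
  set T : Set V := Sᶜ with hTdef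
  have hxnm : x ∉ G.neighborSet x := fun h => G.irrefl h
  have hxU : x ∉ U := by
    intro h
    obtain ⟨i, -, hi⟩ := Set.mem_iUnion₂.mp h
    exact hxnm (hsub i hi)
  have hUmem : ∀ v ∈ U, v ∈ Vc (f v) ∧ (f v : ℕ) + 1 < r := by
    intro v hvU
    obtain ⟨i, hi, hvi⟩ := Set.mem_iUnion₂.mp hvU
    have hfv := hfeq i v hvi
    rw [hfv]
    exact ⟨hvi, hi⟩
  have hWmem : ∀ v ∈ W, v ∈ Vc (f v) ∧ r ≤ (f v : ℕ) + 1 := by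
    intro v hvW
    obtain ⟨i, hi, hvi⟩ := Set.mem_iUnion₂.mp hvW
    have hfv := hfeq i v hvi
    rw [hfv]
    exact ⟨hvi, hi⟩
  -- counting: W has at least p - r + 1 elements
  have hrange : ∀ j : Fin (p - r + 1), r - 1 + (j : ℕ) < p := by
    intro j
    have := j.isLt
    omega
  set g : Fin (p - r + 1) → V := fun j => (hne ⟨r - 1 + j, hrange j⟩).choose with hg
  have hgmem : ∀ j : Fin (p - r + 1), g j ∈ Vc ⟨r - 1 + (j : ℕ), hrange j⟩ :=
    fun j => (hne _).choose_spec
  have hgW : ∀ j, g j ∈ W := by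
    intro j
    refine Set.mem_iUnion₂.mpr ⟨⟨r - 1 + j, hrange j⟩, ?_, hgmem j⟩
    simp only [Set.mem_setOf_eq]
    omega
  have hginj : Function.Injective g := by
    intro j j' hjj
    have h1 : g j' ∈ Vc ⟨r - 1 + j, hrange j⟩ := hjj ▸ hgmem j
    have h2 := hfeq _ _ h1
    have h3 := hfeq _ _ (hgmem j')
    have h4 : (⟨r - 1 + j, hrange j⟩ : Fin p) = ⟨r - 1 + j', hrange j'⟩ := by
      rw [← h2, h3]
    have h5 : r - 1 + (j : ℕ) = r - 1 + (j' : ℕ) := congrArg Fin.val h4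
    exact Fin.ext (by omega)
  have hWcount : p - r + 1 ≤ W.ncard := by
    have h1 : Set.range g ⊆ W := by
      rintro _ ⟨j, rfl⟩
      exact hgW j
    have h2 : (Set.range g).ncard = p - r + 1 := by
      rw [← Set.image_univ, Set.ncard_image_of_injective _ hginj, Set.ncard_univ,
        Nat.card_eq_fintype_card, Fintype.card_fin]
    calc p - r + 1 = (Set.range g).ncard := h2.symm
      _ ≤ W.ncard := Set.ncard_le_ncard h1 (Set.toFinite W)
  have hrn : r + 2 ≤ n := by omega
  have hpn : p ≤ n - 2 := by omega
  -- lower bound for S : χ(G[S]) ≥ r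
  have hScol : ¬ (G.induce S).Colorable (r - 1) := by
    intro hc
    obtain ⟨C, hC1, hC2⟩ := (colorable_induce_iff G S (r - 1)).mp hc
    have hxS : x ∈ S := Set.mem_insert _ _
    set D : V → ℕ := fun v =>
      if (f v : ℕ) + 1 < r then (if C v < C x then C v else C v - 1)
      else (f v : ℕ) - 1 with hD
    have hcol : (G.induce (G.neighborSet x)).Colorable (p - 1) := by
      rw [colorable_induce_iff]
      have hCx := hC1 x hxS
      have hAfacts : ∀ v ∈ G.neighborSet x, (f v : ℕ) + 1 < r →
          C v < r - 1 ∧ C v ≠ C x := by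
        intro v hv hcase
        have hvU : v ∈ U := Set.mem_iUnion₂.mpr ⟨f v, hcase, hnbr v hv⟩
        have hvS : v ∈ S := Set.mem_insert_of_mem _ hvU
        exact ⟨hC1 v hvS, fun h => hC2 x v hxS hvS hv h.symm⟩
      refine ⟨D, ?_, ?_⟩
      · intro v hv
        by_cases hcase : (f v : ℕ) + 1 < r
        · obtain ⟨h1, h2⟩ := hAfacts v hv hcase
          simp only [hD, if_pos hcase]
          split <;> omega
        · have hlt : (f v : ℕ) < p := (f v).isLt
          simp only [hD, if_neg hcase]
          omega
      · intro u v hu hv hadj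
        have hij : f u ≠ f v := by
          intro h
          exact hnadj (f u) u (hnbr u hu) v (h ▸ hnbr v hv) hadj
        have hijval : (f u : ℕ) ≠ (f v : ℕ) := fun h => hij (Fin.ext h)
        have hultp : (f u : ℕ) < p := (f u).isLt
        have hvltp : (f v : ℕ) < p := (f v).isLt
        by_cases hcu : (f u : ℕ) + 1 < r <;> by_cases hcv : (f v : ℕ) + 1 < r
        · -- both in U
          obtain ⟨hu1, hu2⟩ := hAfacts u hu hcu
          obtain ⟨hv1, hv2⟩ := hAfacts v hv hcv
          have huU : u ∈ U := Set.mem_iUnion₂.mpr ⟨f u, hcu, hnbr u hu⟩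
          have hvU : v ∈ U := Set.mem_iUnion₂.mpr ⟨f v, hcv, hnbr v hv⟩
          have huv : C u ≠ C v :=
            hC2 u v (Set.mem_insert_of_mem _ huU) (Set.mem_insert_of_mem _ hvU) hadj
          simp only [hD, if_pos hcu, if_pos hcv]
          split <;> split <;> omega
        · obtain ⟨hu1, hu2⟩ := hAfacts u hu hcu
          simp only [hD, if_pos hcu, if_neg hcv]
          split <;> omega
        · obtain ⟨hv1, hv2⟩ := hAfacts v hv hcv
          simp only [hD, if_neg hcu, if_pos hcv]
          split <;> omega
        · simp only [hD, if_neg hcu, if_neg hcv]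
          omega
    have hle := chromNum_le _ hcol
    rw [← hp] at hle
    omega
  have hSlb : r ≤ chromNum (G.induce S) := by
    have := lt_chromNum _ hScol
    omega
  -- lower bound for T : χ(G[T]) ≥ n + 1 - r
  have hTlb : n + 1 - r ≤ chromNum (G.induce T) := by
    have hnot : ¬ (G.induce T).Colorable (n - r) := by
      intro hc
      obtain ⟨C, hC1, hC2⟩ := (colorable_induce_iff G T (n - r)).mp hc
      have hWfin : (C '' W).Finite := (Set.toFinite W).image C
      have hfree : ∃ c, c < n - r ∧ c ∉ C '' W := by
        by_contra hcon
        push_neg at hcon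
        have hsubW : ↑(Finset.range (n - r)) ⊆ C '' W := by
          intro c hc'
          simp only [Finset.coe_range, Set.mem_Iio] at hc'
          exact hcon c hc'
        have h1 := Set.ncard_le_ncard hsubW hWfin
        rw [Set.ncard_coe_finset, Finset.card_range] at h1
        have h2 : (C '' W).ncard ≤ W.ncard := Set.ncard_image_le (Set.toFinite W)
        omega
      obtain ⟨c, hck, hcW⟩ := hfree
      -- classify vertices outside T
      have hUidx : ∀ v, v ∉ T → v ≠ x → v ∈ Vc (f v) ∧ (f v : ℕ) + 1 < r := by
        intro v hvT hvx
        have hvS : v ∈ S := by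
          by_contra hS'
          exact hvT hS'
        rcases Set.mem_insert_iff.mp hvS with h | h
        · exact absurd h hvx
        · exact hUmem v h
      have hTW : ∀ v ∈ T, G.Adj x v → C v ∈ C '' W := by
        intro v hvT hadj
        have hvn : v ∈ G.neighborSet x := hadj
        have hvV := hnbr v hvn
        have hvW : v ∈ W := by
          by_cases hcase : (f v : ℕ) + 1 < r
          · exfalso
            have hvU : v ∈ U := Set.mem_iUnion₂.mpr ⟨f v, hcase, hvV⟩
            exact hvT (Set.mem_insert_of_mem _ hvU)
          · refine Set.mem_iUnion₂.mpr ⟨f v, ?_, hvV⟩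
            simp only [Set.mem_setOf_eq]
            omega
        exact Set.mem_image_of_mem C hvW
      set D : V → ℕ := fun v =>
        if v ∈ T then C v else if v = x then c else (n - r) + (f v : ℕ) with hD
      have hDT : ∀ v ∈ T, D v = C v := by
        intro v hv
        simp only [hD]
        rw [if_pos hv]
      have hxT : x ∉ T := fun h => h (Set.mem_insert _ _)
      have hDx : D x = c := by
        simp only [hD]
        rw [if_neg hxT]
        simp
      have hDU : ∀ v, v ∉ T → v ≠ x → D v = (n - r) + (f v : ℕ) := by
        intro v h1 h2
        simp only [hD]
        rw [if_neg h1, if_neg h2]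
      have hcol : G.Colorable (n - 1) := by
        apply colorable_of_fun G D
        · intro v
          by_cases hvT : v ∈ T
          · have := hC1 v hvT
            rw [hDT v hvT]
            omega
          · by_cases hvx : v = x
            · subst hvx
              rw [hDx]
              omega
            · obtain ⟨-, h2⟩ := hUidx v hvT hvx
              rw [hDU v hvT hvx]
              omega
        · intro u v hadj
          by_cases huT : u ∈ T <;> by_cases hvT : v ∈ T
          · rw [hDT u huT, hDT v hvT]
            exact hC2 u v huT hvT hadj
          · by_cases hvx : v = x
            · subst hvx
              have hCu : C u ∈ C '' W := hTW u huT hadj.symm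
              rw [hDT u huT, hDx]
              intro h
              exact hcW (h ▸ hCu)
            · obtain ⟨-, h2⟩ := hUidx v hvT hvx
              have := hC1 u huT
              rw [hDT u huT, hDU v hvT hvx]
              omega
          · by_cases hux : u = x
            · subst hux
              have hCv : C v ∈ C '' W := hTW v hvT hadj
              rw [hDx, hDT v hvT]
              intro h
              exact hcW (h ▸ hCv)
            · obtain ⟨-, h2⟩ := hUidx u huT hux
              have := hC1 v hvT
              rw [hDU u huT hux, hDT v hvT]
              omega
          · by_cases hux : u = x <;> by_cases hvx : v = x
            · exact absurd (hux.trans hvx.symm) hadj.ne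
            · subst hux
              obtain ⟨-, h2⟩ := hUidx v hvT hvx
              rw [hDx, hDU v hvT hvx]
              omega
            · subst hvx
              obtain ⟨-, h2⟩ := hUidx u huT hux
              rw [hDU u huT hux, hDx]
              omega
            · obtain ⟨hu1, hu2⟩ := hUidx u huT hux
              obtain ⟨hv1, hv2⟩ := hUidx v hvT hvx
              have hij : f u ≠ f v := by
                intro h
                exact hnadj (f u) u hu1 v (h ▸ hv1) hadj
              have hijval : (f u : ℕ) ≠ (f v : ℕ) := fun h => hij (Fin.ext h)
              rw [hDU u huT hux, hDU v hvT hvx]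
              omega
      have hle := chromNum_le _ hcol
      omega
    have := lt_chromNum _ hnot
    omega
  exact ⟨hpn, S, T, Set.union_compl_self S, disjoint_compl_right, hSlb, hTlb⟩
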